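/- arXiv:1410.6643 — 4 statements merged into one kernel-verified Lean document; each statement's English description precedes it below -/
import Mathlib

section
/- Let V, W be finite-dimensional real vector spaces and C ∈ Hom(V ∧ V, W) arbitrary. Define Γ: V × W → Hom(V,W) by Γ(x,y)v = ½ C(x ∧ v). Then the vector subbundle H of T(V × W) given by H_{(x,y)} = graph Γ(x,y) has curvature tensor (in the canonical trivialization) equal to C at every point (x,y) ∈ V × W. -/
/-- The local representation of the curvature tensor of the subbundle
`H_{(x,y)} = graph Γ(x,y)`, as an element of `Hom(V × V, W)` (evaluated on the
pair `(f,g)`, corresponding to `f ∧ g`). -/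
noncomputable def curvRep {V W : Type*}
    [NormedAddCommGroup V] [NormedSpace ℝ V]
    [NormedAddCommGroup W] [NormedSpace ℝ W]
    (Γ : V × W → (V →L[ℝ] W)) (p : V × W) (f g : V) : W :=
  fderiv ℝ Γ p (f, 0) g - fderiv ℝ Γ p (g, 0) f
    + fderiv ℝ Γ p (0, Γ p f) g - fderiv ℝ Γ p (0, Γ p g) f

/-- Given an arbitrary alternating bilinear map `C : V ∧ V → W` on
finite-dimensional spaces, the subbundle `H` of `T(V × W)` defined by
`H_{(x,y)} = graph Γ(x,y)` with `Γ(x,y)v = ½ C(x ∧ v)` has curvature tensor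
(in the canonical trivialization) equal to `C` at every point. -/
theorem stmt5 {V W : Type*}
    [NormedAddCommGroup V] [NormedSpace ℝ V] [FiniteDimensional ℝ V]
    [NormedAddCommGroup W] [NormedSpace ℝ W] [FiniteDimensional ℝ W]
    (C : V →ₗ[ℝ] V →ₗ[ℝ] W) (hC : ∀ v, C v v = 0)
    (Γ : V × W → (V →L[ℝ] W))
    (hΓ : ∀ (p : V × W) (v : V), Γ p v = (1 / 2 : ℝ) • C p.1 v)
    (p : V × W) (f g : V) :
    curvRep Γ p f g = C f g := by
  -- antisymmetry
  have anti : ∀ a b : V, C a b = - C b a := by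
    intro a b
    have h := hC (a + b)
    simp only [map_add, LinearMap.add_apply, hC] at h
    have h2 : C b a + C a b = 0 := by abel_nf at h ⊢; exact h
    linear_combination (norm := abel) h2
  -- package Γ as a continuous linear map of x
  set M : V →ₗ[ℝ] (V →L[ℝ] W) :=
    { toFun := fun x => (1 / 2 : ℝ) • LinearMap.toContinuousLinearMap (C x)
      map_add' := by
        intro a b
        ext v
        simp [smul_add]
      map_smul' := by
        intro c a
        ext v
        simp [smul_comm c] } with hM
  set L : V →L[ℝ] (V →L[ℝ] W) := LinearMap.toContinuousLinearMap M with hL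
  have hΓeq : Γ = fun q : V × W => L q.1 := by
    funext q
    ext v
    simp [hΓ, hL, hM]
  have hfd : fderiv ℝ Γ p = L.comp (ContinuousLinearMap.fst ℝ V W) := by
    rw [hΓeq]
    exact (L.comp (ContinuousLinearMap.fst ℝ V W)).fderiv
  have hLval : ∀ x : V, (L x : V →L[ℝ] W) = (1 / 2 : ℝ) • LinearMap.toContinuousLinearMap (C x) := by
    intro x; simp [hL, hM]
  rw [curvRep, hfd]
  simp only [ContinuousLinearMap.coe_comp', Function.comp_apply,
    ContinuousLinearMap.coe_fst', hLval]
  simp only [ContinuousLinearMap.smul_apply, LinearMap.coe_toContinuousLinearMap', map_zero,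
    ContinuousLinearMap.zero_apply, smul_zero, sub_zero, add_zero]
  rw [anti g f]
  module
end

section
/- Let V = Re₁ ⊕ Re₂, W = Re₃ ⊕ Re₄, and C ∈ Hom(V ∧ V, W) defined by C(e₁ ∧ e₂) = e₃ (so C is injective). Define Γ(x,y)v = ½C(x ∧ v) and H_{(x,y)} = graph Γ(x,y) in T(V × W) ≅ V × W. Then for each λ ∈ R the hypersurface N_λ = {x₄ = λ} ⊂ V × W satisfies H_{(x,y)} ⊆ T_{(x,y)}N_λ for all (x,y) ∈ N_λ, while the curvature of H equals C (injective) at every point. -/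
/-- `V = ℝe₁ ⊕ ℝe₂`, `W = ℝe₃ ⊕ ℝe₄`, `C(e₁ ∧ e₂) = e₃` (an injective map on
`V ∧ V`), `Γ(x,y)v = ½C(x ∧ v)`, `H_{(x,y)} = graph Γ(x,y)`.  Then every
hypersurface `N_λ = {x₄ = λ}` satisfies `H_{(x,y)} ⊆ T_{(x,y)}N_λ` on `N_λ`,
while the curvature of `H` equals `C` (injective) at every point. -/
theorem stmt11
    (C : (ℝ × ℝ) →ₗ[ℝ] (ℝ × ℝ) →ₗ[ℝ] (ℝ × ℝ))
    (hCalt : ∀ v, C v v = 0)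
    (hCe : C (1, 0) (0, 1) = ((1 : ℝ), (0 : ℝ)))
    (Γ : (ℝ × ℝ) × (ℝ × ℝ) → ((ℝ × ℝ) →L[ℝ] (ℝ × ℝ)))
    (hΓ : ∀ p v, Γ p v = (1 / 2 : ℝ) • C p.1 v)
    (H : (ℝ × ℝ) × (ℝ × ℝ) → Submodule ℝ ((ℝ × ℝ) × (ℝ × ℝ)))
    (hH : ∀ p, H p = LinearMap.graph (Γ p).toLinearMap) :
    -- H is tangent to every hypersurface N_λ = {x₄ = λ}
    (∀ (lam : ℝ) (p : (ℝ × ℝ) × (ℝ × ℝ)), p.2.2 = lam →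
      ∀ w ∈ H p, w.2.2 = (0 : ℝ)) ∧
    -- the curvature of H equals C at every point
    (∀ (p : (ℝ × ℝ) × (ℝ × ℝ)) (f g : ℝ × ℝ), curvRep Γ p f g = C f g) ∧
    -- C is injective on V ∧ V
    (∀ u v : ℝ × ℝ, C u v = 0 → ¬ LinearIndependent ℝ ![u, v]) := by
  -- antisymmetry of C
  have hanti : ∀ u v : ℝ × ℝ, C v u = - C u v := by
    intro u v
    have h := hCalt (u + v)
    simp only [map_add, LinearMap.add_apply, hCalt] at h
    have h' : C u v + C v u = 0 := by rw [← h]; abel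
    exact eq_neg_of_add_eq_zero_right h'
  -- explicit representation of C
  have hrep : ∀ u v : ℝ × ℝ, C u v = (u.1 * v.2 - u.2 * v.1) • ((1 : ℝ), (0 : ℝ)) := by
    rintro ⟨a, b⟩ ⟨c, d⟩
    have hu : ((a, b) : ℝ × ℝ) = a • ((1 : ℝ), (0 : ℝ)) + b • ((0 : ℝ), (1 : ℝ)) := by
      simp [Prod.ext_iff]
    have hv : ((c, d) : ℝ × ℝ) = c • ((1 : ℝ), (0 : ℝ)) + d • ((0 : ℝ), (1 : ℝ)) := by
      simp [Prod.ext_iff]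
    have h21 : C (0, 1) (1, 0) = -((1 : ℝ), (0 : ℝ)) := by rw [hanti, hCe]
    rw [hu, hv]
    simp only [map_add, map_smul, LinearMap.add_apply, LinearMap.smul_apply,
      hCalt, hCe, h21, smul_zero, smul_neg, smul_smul]
    ext <;> simp <;> ring
  refine ⟨?_, ?_, ?_⟩
  · -- tangency
    intro lam p _ w hw
    rw [hH, LinearMap.mem_graph_iff] at hw
    have : w.2 = Γ p w.1 := hw
    rw [this, hΓ, hrep]
    simp
  · -- curvature
    intro p f g
    let M : ((ℝ × ℝ) × (ℝ × ℝ)) →ₗ[ℝ] ((ℝ × ℝ) →L[ℝ] (ℝ × ℝ)) :=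
      ((1 / 2 : ℝ) • (LinearMap.toContinuousLinearMap.toLinearMap.comp C)).comp
        (LinearMap.fst ℝ (ℝ × ℝ) (ℝ × ℝ))
    let L : ((ℝ × ℝ) × (ℝ × ℝ)) →L[ℝ] ((ℝ × ℝ) →L[ℝ] (ℝ × ℝ)) :=
      LinearMap.toContinuousLinearMap M
    have hL : ∀ q v, L q v = (1 / 2 : ℝ) • C q.1 v := by
      intro q v
      simp [L, M]
    have hΓL : Γ = ⇑L := funext fun q => ContinuousLinearMap.ext fun v => by rw [hΓ, hL]
    have hf : fderiv ℝ Γ p = L := by rw [hΓL]; exact L.fderiv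
    have hzero : ∀ y : ℝ × ℝ, ∀ v : ℝ × ℝ, L ((0 : ℝ × ℝ), y) v = 0 := by
      intro y v
      rw [hL]
      simp
    rw [curvRep, hf, hzero, hzero, hL, hL]
    simp only [hanti f g, smul_neg]
    rw [sub_neg_eq_add, ← add_smul]
    norm_num
  · -- injectivity of C on V ∧ V
    intro u v h0 hli
    rw [hrep] at h0
    have hd : u.1 * v.2 - u.2 * v.1 = 0 := by
      have := congrArg Prod.fst h0
      simpa using this
    have key := LinearIndependent.pair_iff.mp hli
    have e1 : v.1 • u + (-u.1) • v = 0 := by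
      apply Prod.ext <;> simp <;> nlinarith [hd]
    have e2 : v.2 • u + (-u.2) • v = 0 := by
      apply Prod.ext <;> simp <;> nlinarith [hd]
    obtain ⟨h1, h2⟩ := key _ _ e1
    obtain ⟨h3, h4⟩ := key _ _ e2
    have hu : u = 0 := by
      apply Prod.ext <;> simp <;> [linarith; linarith]
    exact hli.ne_zero 0 (by simpa using hu)
end

section
/- Let V = Re₁ ⊕ Re₂ ⊕ Re₃, W = Re₄, and C ∈ Hom(V ∧ V, W) defined by C(e₁∧e₂) = C(e₂∧e₃) = 0, C(e₁∧e₃) = e₄ (so C is surjective). Define Γ(x,y)v = ½C(x∧v) and H_{(x,y)} = graph Γ(x,y). Then for each λ ∈ R the surface N_λ = {x₃ = 0, x₄ = λ} ⊂ V × W satisfies T_{(x,y)}N_λ ⊆ H_{(x,y)} for all (x,y) ∈ N_λ, while the curvature of H equals C (surjective) at every point. -/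
/-- `V = ℝe₁ ⊕ ℝe₂ ⊕ ℝe₃`, `W = ℝe₄`, `C(e₁∧e₂) = C(e₂∧e₃) = 0`,
`C(e₁∧e₃) = e₄` (a surjective map onto `W`), `Γ(x,y)v = ½C(x ∧ v)`,
`H_{(x,y)} = graph Γ(x,y)`.  Then every surface `N_λ = {x₃ = 0, x₄ = λ}`
satisfies `T_{(x,y)}N_λ ⊆ H_{(x,y)}` on `N_λ`, while the curvature of `H`
equals `C` (surjective) at every point. -/
theorem stmt12
    (C : (ℝ × ℝ × ℝ) →ₗ[ℝ] (ℝ × ℝ × ℝ) →ₗ[ℝ] ℝ)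
    (hCalt : ∀ v, C v v = 0)
    (hC12 : C (1, 0, 0) (0, 1, 0) = 0)
    (hC23 : C (0, 1, 0) (0, 0, 1) = 0)
    (hC13 : C (1, 0, 0) (0, 0, 1) = 1)
    (Γ : (ℝ × ℝ × ℝ) × ℝ → ((ℝ × ℝ × ℝ) →L[ℝ] ℝ))
    (hΓ : ∀ p v, Γ p v = (1 / 2 : ℝ) • C p.1 v)
    (H : (ℝ × ℝ × ℝ) × ℝ → Submodule ℝ ((ℝ × ℝ × ℝ) × ℝ))
    (hH : ∀ p, H p = LinearMap.graph (Γ p).toLinearMap) :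
    -- every surface N_λ = {x₃ = 0, x₄ = λ} is tangent to H
    (∀ (lam : ℝ) (p : (ℝ × ℝ × ℝ) × ℝ), p.1.2.2 = 0 → p.2 = lam →
      ∀ w : (ℝ × ℝ × ℝ) × ℝ, w.1.2.2 = 0 → w.2 = 0 → w ∈ H p) ∧
    -- the curvature of H equals C at every point
    (∀ (p : (ℝ × ℝ × ℝ) × ℝ) (f g : ℝ × ℝ × ℝ), curvRep Γ p f g = C f g) ∧
    -- C is surjective onto W
    (∀ w : ℝ, ∃ u v : ℝ × ℝ × ℝ, C u v = w) := by
  have hanti : ∀ f g : ℝ × ℝ × ℝ, C f g = - C g f := by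
    intro f g
    have h := hCalt (f + g)
    simp only [map_add, LinearMap.add_apply, hCalt] at h
    linarith
  refine ⟨?_, ?_, ?_⟩
  · -- tangency
    intro lam p hp1 _ w hw1 hw2
    rw [hH]
    rw [LinearMap.mem_graph_iff]
    have h21 : C ((0:ℝ),(1:ℝ),(0:ℝ)) ((1:ℝ),(0:ℝ),(0:ℝ)) = 0 := by
      rw [hanti, hC12]; ring
    have hzero : C p.1 w.1 = 0 := by
      have hdp : p.1 = p.1.1 • ((1:ℝ),(0:ℝ),(0:ℝ)) + p.1.2.1 • ((0:ℝ),(1:ℝ),(0:ℝ)) := by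
        ext <;> simp [hp1]
      have hdw : w.1 = w.1.1 • ((1:ℝ),(0:ℝ),(0:ℝ)) + w.1.2.1 • ((0:ℝ),(1:ℝ),(0:ℝ)) := by
        ext <;> simp [hw1]
      rw [hdp, hdw]
      simp only [map_add, map_smul, LinearMap.add_apply, LinearMap.smul_apply, smul_eq_mul]
      rw [hC12, h21, hCalt ((1:ℝ),(0:ℝ),(0:ℝ)), hCalt ((0:ℝ),(1:ℝ),(0:ℝ))]
      ring
    simp [hΓ, hzero, hw2]
  · -- curvature
    intro p f g
    let C₁ : (ℝ × ℝ × ℝ) →ₗ[ℝ] ((ℝ × ℝ × ℝ) →L[ℝ] ℝ) :=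
      { toFun := fun v => LinearMap.toContinuousLinearMap (C v)
        map_add' := by
          intro x y; refine ContinuousLinearMap.ext fun z => ?_; simp
        map_smul' := by
          intro c x; refine ContinuousLinearMap.ext fun z => ?_; simp }
    let L : ((ℝ × ℝ × ℝ) × ℝ) →L[ℝ] ((ℝ × ℝ × ℝ) →L[ℝ] ℝ) :=
      ((1/2 : ℝ) • (LinearMap.toContinuousLinearMap C₁)).comp
        (ContinuousLinearMap.fst ℝ (ℝ × ℝ × ℝ) ℝ)
    have hΓeq : Γ = fun q => L q := by
      funext q
      refine ContinuousLinearMap.ext fun v => ?_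
      simp [L, C₁, hΓ q v]
    have hfd : fderiv ℝ Γ p = L := by
      rw [hΓeq]; exact L.fderiv
    have h1 : fderiv ℝ Γ p (f, 0) g = (1/2 : ℝ) * C f g := by
      rw [hfd]; simp [L, C₁]
    have h2 : fderiv ℝ Γ p (g, 0) f = (1/2 : ℝ) * C g f := by
      rw [hfd]; simp [L, C₁]
    have h3 : fderiv ℝ Γ p (0, Γ p f) g = 0 := by
      rw [hfd]; simp [L, C₁]
    have h4 : fderiv ℝ Γ p (0, Γ p g) f = 0 := by
      rw [hfd]; simp [L, C₁]
    rw [curvRep, h1, h2, h3, h4, hanti g f]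
    ring
  · -- surjectivity
    intro w
    refine ⟨w • ((1:ℝ),(0:ℝ),(0:ℝ)), ((0:ℝ),(0:ℝ),(1:ℝ)), ?_⟩
    rw [map_smul, LinearMap.smul_apply, hC13, smul_eq_mul, mul_one]
end

section
/- Let L, V be real vector spaces, G ⊆ L, U ⊆ V open sets, A : U → Hom(V,V) smooth, and X, Y : G → L smooth vector fields on G. For β ∈ C^∞(G,U) define the 'vector fields' on the space of maps: (l(A)·r(X))_β(ζ) = A(β(ζ))·β′(ζ)·X(ζ) and r(Y)_β(ζ) = β′(ζ)·Y(ζ). Then pointwise in β and ζ, the bracket [l(A)·r(X), r(Y)]_β(ζ), computed as ⟨(r(Y))′(β); (l(A)·r(X))_β⟩(ζ) − ⟨(l(A)·r(X))′(β); r(Y)_β⟩(ζ), equals −A(β(ζ))·β′(ζ)·[X,Y](ζ), where [X,Y](ζ) = Y′(ζ)X(ζ) − X′(ζ)Y(ζ). -/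
/-- The Lie bracket `[X,Y](ζ) = Y′(ζ)X(ζ) − X′(ζ)Y(ζ)` of vector fields on an
open subset of `L`. -/
noncomputable def lieG {L : Type*} [NormedAddCommGroup L] [NormedSpace ℝ L]
    (X Y : L → L) : L → L :=
  fun ζ => fderiv ℝ Y ζ (X ζ) - fderiv ℝ X ζ (Y ζ)

/-- For `A : U → Hom(V,V)`, `X, Y : G → L` smooth and `β : G → U` smooth, the
bracket `[ l(A)·r(X), r(Y) ]` of the vector fields
`(l(A)·r(X))_β(ζ) = A(β(ζ))·β′(ζ)·X(ζ)` and `r(Y)_β(ζ) = β′(ζ)·Y(ζ)` on the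
space of maps, computed pointwise as
`⟨(r(Y))′(β); (l(A)·r(X))_β⟩(ζ) − ⟨(l(A)·r(X))′(β); r(Y)_β⟩(ζ)`
(directional derivatives in the map variable `β`), equals
`−A(β(ζ))·β′(ζ)·[X,Y](ζ)`. -/
theorem stmt18 {L V : Type*}
    [NormedAddCommGroup L] [NormedSpace ℝ L]
    [NormedAddCommGroup V] [NormedSpace ℝ V]
    (G : Set L) (hG : IsOpen G) (U : Set V) (hU : IsOpen U)
    (A : V → (V →L[ℝ] V)) (hA : ContDiffOn ℝ (⊤ : ℕ∞) A U)
    (X Y : L → L)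
    (hX : ContDiff ℝ (⊤ : ℕ∞) X) (hY : ContDiff ℝ (⊤ : ℕ∞) Y)
    (β : L → V) (hβ : ContDiff ℝ (⊤ : ℕ∞) β) (hβU : Set.MapsTo β G U)
    -- the two vector fields on the manifold of maps, evaluated at β:
    (Z W : L → V)
    (hZ : Z = fun ζ => A (β ζ) (fderiv ℝ β ζ (X ζ)))   -- Z = (l(A)·r(X))_β
    (hW : W = fun ζ => fderiv ℝ β ζ (Y ζ))              -- W = r(Y)_β
    (ζ : L) (hζ : ζ ∈ G) :
    -- ⟨(r(Y))′(β); Z⟩(ζ) − ⟨(l(A)·r(X))′(β); W⟩(ζ) = −A(β(ζ))·β′(ζ)·[X,Y](ζ)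
    deriv (fun t : ℝ => fderiv ℝ (fun ξ => β ξ + t • Z ξ) ζ (Y ζ)) 0
      - deriv (fun t : ℝ =>
          A (β ζ + t • W ζ) (fderiv ℝ (fun ξ => β ξ + t • W ξ) ζ (X ζ))) 0
      = -(A (β ζ) (fderiv ℝ β ζ (lieG X Y ζ))) := by
  have hcU : β ζ ∈ U := hβU hζ
  have hβd : Differentiable ℝ β := hβ.differentiable (by simp)
  have hXd : Differentiable ℝ X := hX.differentiable (by simp)
  have hYd : Differentiable ℝ Y := hY.differentiable (by simp)
  have hβ' : ContDiff ℝ (⊤ : ℕ∞) (fderiv ℝ β) := hβ.fderiv_right (mod_cast le_top)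
  have hβ'd : Differentiable ℝ (fderiv ℝ β) := hβ'.differentiable (by simp)
  have hAc : DifferentiableAt ℝ A (β ζ) :=
    (hA.differentiableOn (by simp)).differentiableAt (hU.mem_nhds hcU)
  have hAβ : DifferentiableAt ℝ (fun ξ => A (β ξ)) ζ := hAc.comp ζ (hβd ζ)
  have hgd : Differentiable ℝ (fun ξ => fderiv ℝ β ξ (X ξ)) :=
    fun x => (hβ'd x).clm_apply (hXd x)
  have hWd : Differentiable ℝ W := by
    rw [hW]; exact fun x => (hβ'd x).clm_apply (hYd x)
  have hZd : DifferentiableAt ℝ Z ζ := by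
    rw [hZ]; exact hAβ.clm_apply (hgd ζ)
  -- first term
  have d1 : deriv (fun t : ℝ => fderiv ℝ (fun ξ => β ξ + t • Z ξ) ζ (Y ζ)) 0
      = fderiv ℝ Z ζ (Y ζ) := by
    have e1 : (fun t : ℝ => fderiv ℝ (fun ξ => β ξ + t • Z ξ) ζ (Y ζ))
        = fun t : ℝ => fderiv ℝ β ζ (Y ζ) + t • fderiv ℝ Z ζ (Y ζ) := by
      funext t
      rw [(show HasFDerivAt (fun ξ => β ξ + t • Z ξ) _ ζ from (hβd ζ).hasFDerivAt.add (hZd.hasFDerivAt.const_smul t)).fderiv]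
      simp
    rw [e1]
    have h : HasDerivAt (fun t : ℝ => fderiv ℝ β ζ (Y ζ) + t • fderiv ℝ Z ζ (Y ζ))
        (fderiv ℝ Z ζ (Y ζ)) 0 := by
      simpa using ((hasDerivAt_id (0:ℝ)).smul_const (fderiv ℝ Z ζ (Y ζ))).const_add
        (fderiv ℝ β ζ (Y ζ))
    exact h.deriv
  -- second term
  have d2 : deriv (fun t : ℝ =>
        A (β ζ + t • W ζ) (fderiv ℝ (fun ξ => β ξ + t • W ξ) ζ (X ζ))) 0
      = fderiv ℝ A (β ζ) (W ζ) (fderiv ℝ β ζ (X ζ)) + A (β ζ) (fderiv ℝ W ζ (X ζ)) := by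
    have e2 : (fun t : ℝ =>
          A (β ζ + t • W ζ) (fderiv ℝ (fun ξ => β ξ + t • W ξ) ζ (X ζ)))
        = fun t : ℝ => A (β ζ + t • W ζ)
            (fderiv ℝ β ζ (X ζ) + t • fderiv ℝ W ζ (X ζ)) := by
      funext t
      rw [(show HasFDerivAt (fun ξ => β ξ + t • W ξ) _ ζ from (hβd ζ).hasFDerivAt.add ((hWd ζ).hasFDerivAt.const_smul t)).fderiv]
      simp
    rw [e2]
    have hγ : HasDerivAt (fun t : ℝ => β ζ + t • W ζ) (W ζ) 0 := by
      simpa using ((hasDerivAt_id (0:ℝ)).smul_const (W ζ)).const_add (β ζ)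
    have hγ0 : β ζ + (0:ℝ) • W ζ = β ζ := by simp
    have hB : HasDerivAt (fun t : ℝ => A (β ζ + t • W ζ)) (fderiv ℝ A (β ζ) (W ζ)) 0 := by
      have h : HasFDerivAt A (fderiv ℝ A (β ζ)) (β ζ + (0:ℝ) • W ζ) := by
        rw [hγ0]; exact hAc.hasFDerivAt
      exact h.comp_hasDerivAt 0 hγ
    have hm : HasDerivAt (fun t : ℝ => fderiv ℝ β ζ (X ζ) + t • fderiv ℝ W ζ (X ζ))
        (fderiv ℝ W ζ (X ζ)) 0 := by
      simpa using ((hasDerivAt_id (0:ℝ)).smul_const (fderiv ℝ W ζ (X ζ))).const_add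
        (fderiv ℝ β ζ (X ζ))
    have := (hB.clm_apply hm).deriv
    simpa using this
  -- fderiv of Z
  have dZ : fderiv ℝ Z ζ (Y ζ)
      = fderiv ℝ A (β ζ) (W ζ) (fderiv ℝ β ζ (X ζ))
        + A (β ζ) (fderiv ℝ (fun ξ => fderiv ℝ β ξ (X ξ)) ζ (Y ζ)) := by
    rw [hZ, fderiv_clm_apply hAβ (hgd ζ)]
    have hchain : fderiv ℝ (fun ξ => A (β ξ)) ζ (Y ζ) = fderiv ℝ A (β ζ) (W ζ) := by
      rw [show (fun ξ => A (β ξ)) = A ∘ β from rfl, fderiv_comp ζ hAc (hβd ζ), hW]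
      simp
    simp [hchain]
    abel
  -- symmetry of second derivative
  have hsym : fderiv ℝ (fderiv ℝ β) ζ (Y ζ) (X ζ) = fderiv ℝ (fderiv ℝ β) ζ (X ζ) (Y ζ) :=
    second_derivative_symmetric (fun y => (hβd y).hasFDerivAt) (hβ'd ζ).hasFDerivAt _ _
  have hgWdiff : fderiv ℝ (fun ξ => fderiv ℝ β ξ (X ξ)) ζ (Y ζ)
        - fderiv ℝ W ζ (X ζ)
      = fderiv ℝ β ζ (fderiv ℝ X ζ (Y ζ) - fderiv ℝ Y ζ (X ζ)) := by
    rw [hW, fderiv_clm_apply (hβ'd ζ) (hXd ζ), fderiv_clm_apply (hβ'd ζ) (hYd ζ)]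
    simp only [ContinuousLinearMap.add_apply, ContinuousLinearMap.flip_apply,
      ContinuousLinearMap.coe_comp', Function.comp_apply, map_sub]
    rw [hsym]; abel
  rw [d1, d2, dZ, lieG]
  have : A (β ζ) (fderiv ℝ (fun ξ => fderiv ℝ β ξ (X ξ)) ζ (Y ζ))
      - A (β ζ) (fderiv ℝ W ζ (X ζ))
      = A (β ζ) (fderiv ℝ β ζ (fderiv ℝ X ζ (Y ζ) - fderiv ℝ Y ζ (X ζ))) := by
    rw [← map_sub, hgWdiff]
  simp only [map_sub, map_neg] at *
  abel_nf
  linear_combination (norm := abel) this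
end
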